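/- A bipartite graph G with perfect matching M has M as its unique perfect matching if and only if G[V] contains an edge (x, x') ∈ M such that x or x' has degree 1 in G, and the graph obtained by deleting x and x' again has this property recursively (i.e., G is reducible to the empty graph by repeatedly removing a matched pair containing a degree-1 vertex). -/

import Mathlib

open SimpleGraph

variable {V : Type*}

/-- `M` is a matching in `G`: a set of edges of `G`, pairwise not sharing a vertex. -/
def IsMatchingIn (G : SimpleGraph V) (M : Set (Sym2 V)) : Prop :=
  M ⊆ G.edgeSet ∧ ∀ e ∈ M, ∀ f ∈ M, e ≠ f → ∀ v : V, ¬(v ∈ e ∧ v ∈ f)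

/-- The set of vertices saturated by the edge set `M`. -/
def sat (M : Set (Sym2 V)) : Set V := {v | ∃ e ∈ M, v ∈ e}

/-- A list of edges alternates w.r.t. `M` if consecutive edges alternate membership in `M`. -/
def Alternates (M : Set (Sym2 V)) (l : List (Sym2 V)) : Prop :=
  l.Chain' (fun e f => (e ∈ M ↔ f ∉ M))

/-- An `M`-alternating cycle: an even cycle whose edges alternate between `M` and `E \ M`. -/
def IsAltCycle (G : SimpleGraph V) (M : Set (Sym2 V)) {v : V} (c : G.Walk v v) : Prop :=
  c.IsCycle ∧ c.edges.length % 2 = 0 ∧ Alternates M c.edges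

/-- `M` is uniquely restricted: it is the unique perfect matching of the subgraph of `G`
induced by the `M`-saturated vertices. -/
def UniquelyRestricted (G : SimpleGraph V) (M : Set (Sym2 V)) : Prop :=
  IsMatchingIn G M ∧ ∀ N : Set (Sym2 V), IsMatchingIn G N →
    (∀ e ∈ N, ∀ v ∈ e, v ∈ sat M) → sat N = sat M → N = M

/-- Arc relation of the digraph `D(G,M)` for a bipartite graph with class `X`:
an arc `x₁ → x₂` between distinct `M`-saturated `X`-vertices whenever
`(x₁, x₂') ∈ E \ M`, where `x₂'` is the `M`-partner of `x₂`. -/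
def DArc (G : SimpleGraph V) (M : Set (Sym2 V)) (X : Set V) (x₁ x₂ : V) : Prop :=
  x₁ ∈ X ∧ x₂ ∈ X ∧ x₁ ≠ x₂ ∧ (∃ y, s(x₁, y) ∈ M) ∧
    ∃ y, s(x₂, y) ∈ M ∧ s(x₁, y) ∈ G.edgeSet ∧ s(x₁, y) ∉ M

/-- Reducibility: the vertex set `S` can be reduced to `∅` by repeatedly deleting both
endpoints of a matching edge one of whose endpoints has degree 1 in the current
induced subgraph. -/
inductive Reducible (G : SimpleGraph V) (M : Set (Sym2 V)) : Set V → Prop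
  | empty : Reducible G M ∅
  | step (S : Set V) (x x' : V) (hx : x ∈ S) (hx' : x' ∈ S) (hm : s(x, x') ∈ M)
      (hdeg : {y ∈ S | G.Adj x y} = {x'} ∨ {y ∈ S | G.Adj x' y} = {x})
      (h : Reducible G M (S \ {x, x'})) : Reducible G M S

lemma partner_unique {G : SimpleGraph V} {M : Set (Sym2 V)} (hM : IsMatchingIn G M)
    {x a b : V} (ha : s(x,a) ∈ M) (hb : s(x,b) ∈ M) : a = b := by
  by_contra hne
  have hnee : s(x,a) ≠ s(x,b) := fun h => by
    rw [Sym2.eq_iff] at h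
    rcases h with ⟨_, h⟩ | ⟨h1, h2⟩
    · exact hne h
    · exact hne (h2.trans h1)
  exact hM.2 _ ha _ hb hnee x ⟨Sym2.mem_mk_left x a, Sym2.mem_mk_left x b⟩

lemma not_mem_of_matching {G : SimpleGraph V} {M : Set (Sym2 V)} (hM : IsMatchingIn G M)
    {x a : V} {e : Sym2 V} (ha : s(x,a) ∈ M) (he : e ∈ M) (hne : e ≠ s(x,a)) : x ∉ e :=
  fun hx => hM.2 _ he _ ha hne x ⟨hx, Sym2.mem_mk_left x a⟩

lemma deg_one_forces {G : SimpleGraph V} {N : Set (Sym2 V)} {S : Set V} {x x' : V}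
    (hN : IsMatchingIn G N) (hsat : sat N = S) (hx : x ∈ S)
    (hdeg : {y ∈ S | G.Adj x y} = {x'}) : s(x, x') ∈ N := by
  have hxN : x ∈ sat N := hsat ▸ hx
  obtain ⟨e, heN, hxe⟩ := hxN
  obtain ⟨w, rfl⟩ := Sym2.mem_iff_exists.mp hxe
  have hadj : G.Adj x w := hN.1 heN
  have hwS : w ∈ S := by
    rw [← hsat]; exact ⟨_, heN, Sym2.mem_mk_right x w⟩
  have : w ∈ ({x'} : Set V) := hdeg ▸ (⟨hwS, hadj⟩ : w ∈ {y ∈ S | G.Adj x y})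
  rwa [Set.mem_singleton_iff.mp this] at heN

lemma step_unique {G : SimpleGraph V} {M N : Set (Sym2 V)} {S : Set V} {x x' : V}
    (hM : IsMatchingIn G M) (hN : IsMatchingIn G N) (hsat : sat N = S)
    (hm : s(x,x') ∈ M) (hx : x ∈ S) (hx' : x' ∈ S)
    (hdeg : {y ∈ S | G.Adj x y} = {x'})
    (ih : ∀ N', IsMatchingIn G N' → sat N' = S \ {x, x'} →
      N' = {e ∈ M | ∀ v ∈ e, v ∈ S \ {x, x'}}) :
    N = {e ∈ M | ∀ v ∈ e, v ∈ S} := by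
  have hmN : s(x, x') ∈ N := deg_one_forces hN hsat hx hdeg
  set N' : Set (Sym2 V) := N \ {s(x,x')} with hN'def
  have hN'm : IsMatchingIn G N' :=
    ⟨fun e he => hN.1 he.1, fun e he f hf => hN.2 e he.1 f hf.1⟩
  have hsat' : sat N' = S \ {x, x'} := by
    ext v
    constructor
    · rintro ⟨e, ⟨heN, hee⟩, hve⟩
      refine ⟨hsat ▸ ⟨e, heN, hve⟩, ?_⟩
      rintro (rfl | rfl)
      · exact not_mem_of_matching hN hmN heN hee hve
      · have hmN' : s(v, x) ∈ N := by rwa [Sym2.eq_swap] at hmN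
        have : e ≠ s(v, x) := by rwa [← Sym2.eq_swap] at hee
        exact not_mem_of_matching hN hmN' heN this hve
    · rintro ⟨hvS, hv⟩
      have : v ∈ sat N := hsat ▸ hvS
      obtain ⟨e, heN, hve⟩ := this
      refine ⟨e, ⟨heN, ?_⟩, hve⟩
      rintro rfl
      rcases Sym2.mem_iff.mp hve with rfl | rfl
      · exact hv (Or.inl rfl)
      · exact hv (Or.inr rfl)
  have hkey := ih N' hN'm hsat'
  ext e
  constructor
  · intro heN
    by_cases hee : e = s(x, x')
    · subst hee
      refine ⟨hm, ?_⟩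
      intro v hv
      rcases Sym2.mem_iff.mp hv with rfl | rfl
      · exact hx
      · exact hx'
    · have : e ∈ N' := ⟨heN, hee⟩
      rw [hkey] at this
      exact ⟨this.1, fun v hv => (this.2 v hv).1⟩
  · rintro ⟨heM, hes⟩
    by_cases hee : e = s(x, x')
    · exact hee ▸ hmN
    · have hxe : x ∉ e := not_mem_of_matching hM hm heM hee
      have hx'e : x' ∉ e := by
        have hm' : s(x', x) ∈ M := by rwa [Sym2.eq_swap] at hm
        have : e ≠ s(x', x) := by rwa [← Sym2.eq_swap] at hee
        exact not_mem_of_matching hM hm' heM this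
      have : e ∈ N' := by
        rw [hkey]
        refine ⟨heM, fun v hv => ⟨hes v hv, ?_⟩⟩
        rintro (rfl | rfl)
        · exact hxe hv
        · exact hx'e hv
      exact this.1

lemma reducible_unique {G : SimpleGraph V} {M : Set (Sym2 V)} (hM : IsMatchingIn G M)
    {S : Set V} (hred : Reducible G M S) :
    ∀ N, IsMatchingIn G N → sat N = S → N = {e ∈ M | ∀ v ∈ e, v ∈ S} := by
  induction hred with
  | empty =>
    intro N hN hsat
    ext e
    simp only [Set.mem_setOf_eq, Set.mem_empty_iff_false]
    constructor
    · intro heN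
      have hv : e.out.1 ∈ sat N := ⟨e, heN, e.out_fst_mem⟩
      rw [hsat] at hv
      exact absurd hv (Set.notMem_empty _)
    · rintro ⟨heM, h⟩
      exact absurd (h e.out.1 e.out_fst_mem) id
  | step S x x' hx hx' hm hdeg h ih =>
    intro N hN hsat
    rcases hdeg with hdeg | hdeg
    · exact step_unique hM hN hsat hm hx hx' hdeg ih
    · have hm' : s(x', x) ∈ M := by rwa [Sym2.eq_swap] at hm
      have hpair : (S \ {x', x}) = (S \ {x, x'}) := by rw [Set.pair_comm]
      have ih' : ∀ N', IsMatchingIn G N' → sat N' = S \ {x', x} →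
          N' = {e ∈ M | ∀ v ∈ e, v ∈ S \ {x', x}} := by
        intro N' h1 h2
        rw [hpair] at h2 ⊢
        exact ih N' h1 h2
      exact step_unique hM hN hsat hm' hx' hx hdeg ih'

lemma exists_deg_one [Fintype V] {G : SimpleGraph V} {X : Set V} {M : Set (Sym2 V)}
    (hbip : ∀ v w, G.Adj v w → (v ∈ X ↔ w ∉ X)) (hM : IsMatchingIn G M)
    {S : Set V} (hSne : S.Nonempty)
    (h1 : sat {e ∈ M | ∀ v ∈ e, v ∈ S} = S)
    (h2 : ∀ N, IsMatchingIn G N → sat N = S → N = {e ∈ M | ∀ v ∈ e, v ∈ S}) :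
    ∃ x x', x ∈ S ∧ x' ∈ S ∧ s(x,x') ∈ M ∧
      ({y ∈ S | G.Adj x y} = {x'} ∨ {y ∈ S | G.Adj x' y} = {x}) := by
  classical
  by_contra hno
  push_neg at hno
  -- partner function
  have hpex : ∀ v : V, ∃ w, v ∈ S → w ∈ S ∧ s(v, w) ∈ M := by
    intro v
    by_cases hv : v ∈ S
    · have hv' : v ∈ sat {e ∈ M | ∀ u ∈ e, u ∈ S} := by rw [h1]; exact hv
      obtain ⟨e, ⟨heM, heS⟩, hve⟩ := hv'
      obtain ⟨w, rfl⟩ := Sym2.mem_iff_exists.mp hve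
      exact ⟨w, fun _ => ⟨heS w (Sym2.mem_mk_right v w), heM⟩⟩
    · exact ⟨v, fun h => absurd h hv⟩
  choose p hp using hpex
  -- any M-edge at a saturated vertex is the partner edge
  have hMedge : ∀ v, v ∈ S → ∀ e ∈ M, v ∈ e → e = s(v, p v) := by
    intro v hv e heM hve
    obtain ⟨w, rfl⟩ := Sym2.mem_iff_exists.mp hve
    rw [partner_unique hM heM (hp v hv).2]
  -- the second-neighbor function
  have hnbex : ∀ x : V, ∃ y, x ∈ S → y ∈ S ∧ G.Adj x y ∧ y ≠ p x := by
    intro x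
    by_cases hx : x ∈ S
    · have hpm := (hp x hx).2
      have hpS := (hp x hx).1
      have hnd := (hno x (p x) hx hpS hpm).1
      have hadj : G.Adj x (p x) := hM.1 hpm
      by_contra hcon
      push_neg at hcon
      apply hnd
      ext y
      simp only [Set.mem_setOf_eq, Set.mem_singleton_iff]
      constructor
      · rintro ⟨hyS, hady⟩
        by_contra hne
        exact hne ((hcon y).2 hyS hady)
      · rintro rfl
        exact ⟨hpS, hadj⟩
    · exact ⟨x, fun h => absurd h hx⟩
  choose nb hnb using hnbex
  set g : V → V := fun x => p (nb x) with hgdef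
  have hstep : ∀ x, x ∈ S → x ∈ X → nb x ∈ S ∧ nb x ∉ X ∧ g x ∈ S ∧ g x ∈ X := by
    intro x hxS hxX
    obtain ⟨hyS, hady, hyne⟩ := hnb x hxS
    have hyX : nb x ∉ X := (hbip x (nb x) hady).mp hxX
    have hgS : g x ∈ S := (hp (nb x) hyS).1
    have hgadj : G.Adj (nb x) (g x) := hM.1 (hp (nb x) hyS).2
    have hgX : g x ∈ X := by
      by_contra h
      exact hyX ((hbip _ _ hgadj).mpr h)
    exact ⟨hyS, hyX, hgS, hgX⟩
  -- starting point in S ∩ X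
  obtain ⟨v₀, hv₀S⟩ := hSne
  obtain ⟨x₀, hx₀S, hx₀X⟩ : ∃ x₀, x₀ ∈ S ∧ x₀ ∈ X := by
    by_cases hvX : v₀ ∈ X
    · exact ⟨v₀, hv₀S, hvX⟩
    · refine ⟨p v₀, (hp v₀ hv₀S).1, ?_⟩
      have hadj : G.Adj v₀ (p v₀) := hM.1 (hp v₀ hv₀S).2
      by_contra h
      exact hvX ((hbip _ _ hadj).mpr h)
  have hiter : ∀ n, g^[n] x₀ ∈ S ∧ g^[n] x₀ ∈ X := by
    intro n
    induction n with
    | zero => exact ⟨hx₀S, hx₀X⟩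
    | succ n ih =>
      rw [Function.iterate_succ_apply']
      exact ⟨(hstep _ ih.1 ih.2).2.2.1, (hstep _ ih.1 ih.2).2.2.2⟩
  -- find a cycle
  have hcyc : ∃ z q, 0 < q ∧ g^[q] z = z ∧ z ∈ S ∧ z ∈ X := by
    obtain ⟨m, n, hmn, heq⟩ := Finite.exists_ne_map_eq_of_infinite (fun n : ℕ => g^[n] x₀)
    rcases hmn.lt_or_gt with h | h
    · refine ⟨g^[m] x₀, n - m, by omega, ?_, (hiter m).1, (hiter m).2⟩
      rw [← Function.iterate_add_apply, show n - m + m = n by omega]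
      exact heq.symm
    · refine ⟨g^[n] x₀, m - n, by omega, ?_, (hiter n).1, (hiter n).2⟩
      rw [← Function.iterate_add_apply, show m - n + n = m by omega]
      exact heq
  obtain ⟨z, q, hq, hzq, hzS, hzX⟩ := hcyc
  have hPk : ∃ k, 0 < k ∧ g^[k] z = z := ⟨q, hq, hzq⟩
  set k := Nat.find hPk with hkdef
  obtain ⟨hkpos, hkz⟩ := Nat.find_spec hPk
  have hkmin : ∀ j, 0 < j → j < k → g^[j] z ≠ z := fun j hj hjk h =>
    Nat.find_min hPk hjk ⟨hj, h⟩
  have hzi : ∀ i, g^[i] z ∈ S ∧ g^[i] z ∈ X := by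
    intro i
    induction i with
    | zero => exact ⟨hzS, hzX⟩
    | succ i ih =>
      rw [Function.iterate_succ_apply']
      exact ⟨(hstep _ ih.1 ih.2).2.2.1, (hstep _ ih.1 ih.2).2.2.2⟩
  have hdist : ∀ i j, i < k → j < k → g^[i] z = g^[j] z → i = j := by
    suffices h : ∀ i j, i ≤ j → j < k → g^[i] z = g^[j] z → i = j by
      intro i j hi hj he
      rcases le_total i j with hle | hle
      · exact h i j hle hj he
      · exact (h j i hle hi he.symm).symm
    intro i j hij hj he
    by_contra hne
    have h1 : g^[k - j] (g^[j] z) = z := by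
      rw [← Function.iterate_add_apply, show k - j + j = k by omega]
      exact hkz
    have h3 : g^[k - j + i] z = z := by
      rw [Function.iterate_add_apply, he]
      exact h1
    exact hkmin (k - j + i) (by omega) (by omega) h3
  have hmod : ∀ i, i ≤ k → g^[i % k] z = g^[i] z := by
    intro i hi
    rcases eq_or_lt_of_le hi with rfl | h
    · simp [Nat.mod_self]; exact hkz.symm
    · rw [Nat.mod_eq_of_lt h]
  have hsucc_inj : ∀ i j, i < k → j < k → g^[i+1] z = g^[j+1] z → i = j := by
    intro i j hi hj he
    have h1 : g^[(i+1) % k] z = g^[(j+1) % k] z := by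
      rw [hmod _ (by omega), hmod _ (by omega), he]
    have h2 := hdist _ _ (Nat.mod_lt _ hkpos) (Nat.mod_lt _ hkpos) h1
    rcases Nat.lt_or_ge (i+1) k with hik | hik <;>
      rcases Nat.lt_or_ge (j+1) k with hjk | hjk
    · rw [Nat.mod_eq_of_lt hik, Nat.mod_eq_of_lt hjk] at h2; omega
    · have : j + 1 = k := by omega
      rw [Nat.mod_eq_of_lt hik, this, Nat.mod_self] at h2; omega
    · have : i + 1 = k := by omega
      rw [Nat.mod_eq_of_lt hjk, this, Nat.mod_self] at h2; omega
    · omega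
  -- abbreviations for cycle edges
  have hAadj : ∀ i, G.Adj (g^[i] z) (nb (g^[i] z)) := fun i => (hnb _ (hzi i).1).2.1
  have hAnb_S : ∀ i, nb (g^[i] z) ∈ S := fun i => (hnb _ (hzi i).1).1
  have hAnb_X : ∀ i, nb (g^[i] z) ∉ X := fun i => (hstep _ (hzi i).1 (hzi i).2).2.1
  have hAnotM : ∀ i, s(g^[i] z, nb (g^[i] z)) ∉ M := by
    intro i hmem
    have := partner_unique hM hmem (hp _ (hzi i).1).2
    exact (hnb _ (hzi i).1).2.2 this
  have hgsucc : ∀ i, g^[i+1] z = p (nb (g^[i] z)) := by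
    intro i
    rw [Function.iterate_succ_apply']
  have hRmem : ∀ i, s(nb (g^[i] z), g^[i+1] z) ∈ M := by
    intro i
    rw [hgsucc i]
    exact (hp _ (hAnb_S i)).2
  have hnb_inj : ∀ i j, i < k → j < k → nb (g^[i] z) = nb (g^[j] z) → i = j := by
    intro i j hi hj he
    apply hsucc_inj i j hi hj
    rw [hgsucc i, hgsucc j, he]
  -- M-edges meeting a cycle vertex are cycle matching edges
  have hedgeAt : ∀ i, i < k → ∀ e ∈ M, (g^[i] z ∈ e ∨ nb (g^[i] z) ∈ e) →
      ∃ j, j < k ∧ e = s(nb (g^[j] z), g^[j+1] z) := by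
    intro i hi e heM hve
    rcases hve with hv | hv
    · -- e is the partner edge of z_i
      set j : ℕ := if i = 0 then k - 1 else i - 1 with hjdef
      have hjk : j < k := by rw [hjdef]; split <;> omega
      have hj1 : g^[j+1] z = g^[i] z := by
        rw [hjdef]
        split
        · rename_i hi0
          rw [show k - 1 + 1 = k by omega, hkz, hi0]
          rfl
        · rename_i hi0
          rw [show i - 1 + 1 = i by omega]
      refine ⟨j, hjk, ?_⟩
      have hpz : s(g^[i] z, nb (g^[j] z)) ∈ M := by
        have := hRmem j
        rw [hj1] at this
        rwa [Sym2.eq_swap] at this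
      have he' := hMedge _ (hzi i).1 e heM hv
      have hpp : p (g^[i] z) = nb (g^[j] z) :=
        partner_unique hM (hp _ (hzi i).1).2 hpz
      rw [he', hpp, Sym2.eq_swap, ← hj1]
    · refine ⟨i, hi, ?_⟩
      have he' := hMedge _ (hAnb_S i) e heM hv
      rw [he', hgsucc i]
  -- construct the flipped matching
  set MS : Set (Sym2 V) := {e ∈ M | ∀ v ∈ e, v ∈ S} with hMSdef
  set R : Set (Sym2 V) := {e | ∃ i, i < k ∧ e = s(nb (g^[i] z), g^[i+1] z)} with hRdef
  set A : Set (Sym2 V) := {e | ∃ i, i < k ∧ e = s(g^[i] z, nb (g^[i] z))} with hAdef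
  set N : Set (Sym2 V) := (MS \ R) ∪ A with hNdef
  have hNmatch : IsMatchingIn G N := by
    constructor
    · rintro e (⟨⟨heM, _⟩, _⟩ | ⟨i, hi, rfl⟩)
      · exact hM.1 heM
      · exact G.mem_edgeSet.mpr (hAadj i)
    · rintro e (⟨⟨heM, heS⟩, heR⟩ | ⟨i, hi, rfl⟩) f
        (⟨⟨hfM, hfS⟩, hfR⟩ | ⟨j, hj, rfl⟩) hef v ⟨hve, hvf⟩
      · exact hM.2 e heM f hfM hef v ⟨hve, hvf⟩
      · rcases Sym2.mem_iff.mp hvf with rfl | rfl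
        · obtain ⟨j', hj', he'⟩ := hedgeAt j hj e heM (Or.inl hve)
          exact heR ⟨j', hj', he'⟩
        · obtain ⟨j', hj', he'⟩ := hedgeAt j hj e heM (Or.inr hve)
          exact heR ⟨j', hj', he'⟩
      · rcases Sym2.mem_iff.mp hve with rfl | rfl
        · obtain ⟨j', hj', he'⟩ := hedgeAt i hi f hfM (Or.inl hvf)
          exact hfR ⟨j', hj', he'⟩
        · obtain ⟨j', hj', he'⟩ := hedgeAt i hi f hfM (Or.inr hvf)
          exact hfR ⟨j', hj', he'⟩
      · have hij : i ≠ j := fun h => hef (by rw [h])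
        rcases Sym2.mem_iff.mp hve with rfl | rfl
        · rcases Sym2.mem_iff.mp hvf with h | h
          · exact hij (hdist i j hi hj h)
          · exact hAnb_X j (by rw [← h]; exact (hzi i).2)
        · rcases Sym2.mem_iff.mp hvf with h | h
          · exact hAnb_X i (by rw [h]; exact (hzi j).2)
          · exact hij (hnb_inj i j hi hj h)
  have hsatN : sat N = S := by
    ext v
    constructor
    · rintro ⟨e, (⟨⟨heM, heS⟩, _⟩ | ⟨i, hi, rfl⟩), hve⟩
      · exact heS v hve
      · rcases Sym2.mem_iff.mp hve with rfl | rfl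
        · exact (hzi i).1
        · exact hAnb_S i
    · intro hv
      have hv' : v ∈ sat MS := by rw [h1]; exact hv
      obtain ⟨e, heMS, hve⟩ := hv'
      by_cases heR : e ∈ R
      · obtain ⟨i, hi, rfl⟩ := heR
        rcases Sym2.mem_iff.mp hve with rfl | rfl
        · exact ⟨s(g^[i] z, nb (g^[i] z)), Or.inr ⟨i, hi, rfl⟩, Sym2.mem_mk_right _ _⟩
        · refine ⟨s(g^[(i+1) % k] z, nb (g^[(i+1) % k] z)),
            Or.inr ⟨(i+1) % k, Nat.mod_lt _ hkpos, rfl⟩, ?_⟩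
          rw [hmod _ (by omega)]
          exact Sym2.mem_mk_left _ _
      · exact ⟨e, Or.inl ⟨heMS, heR⟩, hve⟩
  have hNA : s(g^[0] z, nb (g^[0] z)) ∈ N := Or.inr ⟨0, hkpos, rfl⟩
  have hNeq := h2 N hNmatch hsatN
  rw [hNeq] at hNA
  exact hAnotM 0 hNA.1

lemma unique_reducible [Fintype V] {G : SimpleGraph V} {X : Set V} {M : Set (Sym2 V)}
    (hbip : ∀ v w, G.Adj v w → (v ∈ X ↔ w ∉ X)) (hM : IsMatchingIn G M) :
    ∀ n (S : Set V), S.ncard ≤ n →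
      sat {e ∈ M | ∀ v ∈ e, v ∈ S} = S →
      (∀ N, IsMatchingIn G N → sat N = S → N = {e ∈ M | ∀ v ∈ e, v ∈ S}) →
      Reducible G M S := by
  intro n
  induction n with
  | zero =>
    intro S hcard h1 h2
    have hS : S = ∅ := (Set.ncard_eq_zero S.toFinite).mp (by omega)
    rw [hS]
    exact Reducible.empty
  | succ n ih =>
    intro S hcard h1 h2
    rcases Set.eq_empty_or_nonempty S with rfl | hSne
    · exact Reducible.empty
    obtain ⟨x, x', hx, hx', hm, hdeg⟩ := exists_deg_one hbip hM hSne h1 h2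
    refine Reducible.step S x x' hx hx' hm hdeg ?_
    set S' : Set V := S \ {x, x'} with hS'def
    -- the restricted matching on S'
    have hMS' : {e ∈ M | ∀ v ∈ e, v ∈ S'} = {e ∈ M | ∀ v ∈ e, v ∈ S} \ {s(x,x')} := by
      ext e
      constructor
      · rintro ⟨heM, heS⟩
        refine ⟨⟨heM, fun v hv => (heS v hv).1⟩, ?_⟩
        intro hee
        rw [Set.mem_singleton_iff] at hee
        subst hee
        exact (heS x (Sym2.mem_mk_left x x')).2 (Set.mem_insert _ _)
      · rintro ⟨⟨heM, heS⟩, hee⟩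
        rw [Set.mem_singleton_iff] at hee
        have hxe : x ∉ e := not_mem_of_matching hM hm heM hee
        have hx'e : x' ∉ e := by
          have hm2 : s(x', x) ∈ M := by rwa [Sym2.eq_swap] at hm
          have hee2 : e ≠ s(x', x) := by rwa [← Sym2.eq_swap] at hee
          exact not_mem_of_matching hM hm2 heM hee2
        refine ⟨heM, fun v hv => ⟨heS v hv, ?_⟩⟩
        rintro (rfl | rfl)
        · exact hxe hv
        · exact hx'e hv
    have h1' : sat {e ∈ M | ∀ v ∈ e, v ∈ S'} = S' := by
      rw [hMS']
      ext v
      constructor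
      · rintro ⟨e, ⟨⟨heM, heS⟩, hee⟩, hve⟩
        rw [Set.mem_singleton_iff] at hee
        refine ⟨heS v hve, ?_⟩
        rintro (rfl | rfl)
        · exact not_mem_of_matching hM hm heM hee hve
        · have hm2 : s(v, x) ∈ M := by rwa [Sym2.eq_swap] at hm
          have hee2 : e ≠ s(v, x) := by rwa [← Sym2.eq_swap] at hee
          exact not_mem_of_matching hM hm2 heM hee2 hve
      · rintro ⟨hvS, hv⟩
        have hv' : v ∈ sat {e ∈ M | ∀ u ∈ e, u ∈ S} := by rw [h1]; exact hvS
        obtain ⟨e, heMS, hve⟩ := hv'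
        refine ⟨e, ⟨heMS, ?_⟩, hve⟩
        rw [Set.mem_singleton_iff]
        rintro rfl
        rcases Sym2.mem_iff.mp hve with rfl | rfl
        · exact hv (Set.mem_insert _ _)
        · exact hv (Set.mem_insert_of_mem _ rfl)
    have h2' : ∀ N, IsMatchingIn G N → sat N = S' → N = {e ∈ M | ∀ v ∈ e, v ∈ S'} := by
      intro N hN hsat
      set Np : Set (Sym2 V) := N ∪ {s(x,x')} with hNpdef
      have hNx : s(x, x') ∉ N := by
        intro h
        have : x ∈ sat N := ⟨_, h, Sym2.mem_mk_left x x'⟩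
        rw [hsat] at this
        exact this.2 (Set.mem_insert _ _)
      have hNpm : IsMatchingIn G Np := by
        constructor
        · rintro e (he | he)
          · exact hN.1 he
          · rw [Set.mem_singleton_iff] at he
            subst he
            exact hM.1 hm
        · rintro e (he | he) f (hf | hf) hef v ⟨hve, hvf⟩
          · exact hN.2 e he f hf hef v ⟨hve, hvf⟩
          · rw [Set.mem_singleton_iff] at hf
            subst hf
            have : v ∈ sat N := ⟨e, he, hve⟩
            rw [hsat] at this
            rcases Sym2.mem_iff.mp hvf with rfl | rfl
            · exact this.2 (Set.mem_insert _ _)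
            · exact this.2 (Set.mem_insert_of_mem _ rfl)
          · rw [Set.mem_singleton_iff] at he
            subst he
            have : v ∈ sat N := ⟨f, hf, hvf⟩
            rw [hsat] at this
            rcases Sym2.mem_iff.mp hve with rfl | rfl
            · exact this.2 (Set.mem_insert _ _)
            · exact this.2 (Set.mem_insert_of_mem _ rfl)
          · rw [Set.mem_singleton_iff] at he hf
            exact hef (he.trans hf.symm)
      have hNpsat : sat Np = S := by
        ext v
        constructor
        · rintro ⟨e, (he | he), hve⟩
          · have : v ∈ sat N := ⟨e, he, hve⟩
            rw [hsat] at this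
            exact this.1
          · rw [Set.mem_singleton_iff] at he
            subst he
            rcases Sym2.mem_iff.mp hve with rfl | rfl
            · exact hx
            · exact hx'
        · intro hv
          by_cases hvx : v = x
          · exact ⟨s(x,x'), Or.inr rfl, by rw [hvx]; exact Sym2.mem_mk_left x x'⟩
          by_cases hvx' : v = x'
          · exact ⟨s(x,x'), Or.inr rfl, by rw [hvx']; exact Sym2.mem_mk_right x x'⟩
          have : v ∈ sat N := by
            rw [hsat]
            refine ⟨hv, ?_⟩
            rintro (rfl | rfl)
            · exact hvx rfl
            · exact hvx' rfl
          obtain ⟨e, he, hve⟩ := this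
          exact ⟨e, Or.inl he, hve⟩
      have hNpeq := h2 Np hNpm hNpsat
      rw [hMS']
      have : N = Np \ {s(x,x')} := by
        ext e
        constructor
        · intro he
          refine ⟨Or.inl he, ?_⟩
          rw [Set.mem_singleton_iff]
          rintro rfl
          exact hNx he
        · rintro ⟨(he | he), hee⟩
          · exact he
          · exact absurd he hee
      rw [this, hNpeq]
    have hcard' : S'.ncard ≤ n := by
      have hss : S' ⊂ S := by
        refine (Set.ssubset_iff_of_subset Set.diff_subset).mpr ⟨x, hx, ?_⟩
        intro h
        exact h.2 (Set.mem_insert _ _)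
      have := Set.ncard_lt_ncard hss S.toFinite
      omega
    exact ih S' hcard' h1' h2'

/-- a bipartite graph `G` with perfect matching `M` has `M` as its unique
perfect matching iff `G` is reducible to the empty graph by repeatedly removing a
matched pair containing a degree-1 vertex. -/
theorem stmt13 [Fintype V] (G : SimpleGraph V) (X : Set V) (M : Set (Sym2 V))
    (hbip : ∀ v w, G.Adj v w → (v ∈ X ↔ w ∉ X)) (hM : IsMatchingIn G M)
    (hperf : sat M = Set.univ) :
    (∀ N : Set (Sym2 V), IsMatchingIn G N → sat N = Set.univ → N = M) ↔
      Reducible G M Set.univ := by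
  have hMuniv : {e ∈ M | ∀ v ∈ e, v ∈ (Set.univ : Set V)} = M := by
    ext e
    simp [Set.mem_univ]
  constructor
  · intro huniq
    refine unique_reducible hbip hM (Set.univ : Set V).ncard Set.univ le_rfl ?_ ?_
    · rw [hMuniv]
      exact hperf
    · intro N hN hsat
      rw [hMuniv]
      exact huniq N hN hsat
  · intro hred N hN hsat
    have := reducible_unique hM hred N hN hsat
    rw [this, hMuniv]
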